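/- Let φ(I) ∈ ℝ^t be any real sequence of length t, and let t ∈ ℕ, α ∈ (0,1) with α = (1/2)^{1/(t−1)}. There exist a diagonal matrix A ∈ ℂ^{t×t} with A_{jj} = α·exp(2πi(j−1)/t), and vectors B, C ∈ ℂ^t with ‖B‖₂ ≤ 2‖φ(I)‖₂ and ‖C‖₂ ≤ 1, such that for every k ∈ {1,...,t}: Re(Σ_{j=1}^t A_{jj}^{k−1} B_j C_j) = φ(I)_k. -/

import Mathlib

open Real Finset Complex

noncomputable def gg (t : ℕ) (d : ℤ) : ℂ := Complex.exp (2 * π * Complex.I * d / t)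

lemma gg_dvd (t : ℕ) (ht : 0 < t) (d : ℤ) (h : (t:ℤ) ∣ d) : gg t d = 1 := by
  obtain ⟨c, rfl⟩ := h
  have htc : (t:ℂ) ≠ 0 := Nat.cast_ne_zero.mpr ht.ne'
  unfold gg
  rw [show 2 * (π:ℂ) * Complex.I * ((t:ℤ)*c : ℤ) / t = (c:ℂ) * (2 * π * Complex.I) by
    push_cast; field_simp]
  exact Complex.exp_int_mul_two_pi_mul_I c

lemma gg_add (t : ℕ) (a b : ℤ) : gg t (a + b) = gg t a * gg t b := by
  unfold gg
  rw [← Complex.exp_add]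
  congr 1
  push_cast
  ring

lemma gg_pow (t : ℕ) (d : ℤ) (n : ℕ) : gg t d ^ n = gg t (n * d) := by
  unfold gg
  rw [← Complex.exp_nat_mul]
  congr 1
  push_cast
  ring

lemma gg_conj (t : ℕ) (d : ℤ) : (starRingEnd ℂ) (gg t d) = gg t (-d) := by
  unfold gg
  rw [← Complex.exp_conj]
  congr 1
  simp [map_div₀, map_mul, map_ofNat, Complex.conj_I]

lemma gg_ne_one (t : ℕ) (ht : 0 < t) (d : ℤ) (h : ¬ (t:ℤ) ∣ d) : gg t d ≠ 1 := by
  intro he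
  rw [gg, Complex.exp_eq_one_iff] at he
  obtain ⟨n, hn⟩ := he
  have htc : (t:ℂ) ≠ 0 := Nat.cast_ne_zero.mpr ht.ne'
  have h2 : (2 * (π:ℂ) * Complex.I) ≠ 0 := by
    simp [Complex.I_ne_zero, Real.pi_ne_zero, Complex.ofReal_ne_zero]
  have : (d:ℂ) = n * t := by
    field_simp at hn
    have hn' : 2*(π:ℂ)*Complex.I*(d:ℂ) = 2*(π:ℂ)*Complex.I*((n:ℂ)*t) := by
      push_cast
      linear_combination (2*(π:ℂ)*Complex.I) * hn
    have := mul_left_cancel₀ h2 hn'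
    linear_combination this
  have : d = n * t := by exact_mod_cast this
  exact h ⟨n, by rw [this]; ring⟩

lemma ortho (t : ℕ) (ht : 0 < t) (d : ℤ) :
    ∑ j : Fin t, gg t ((j:ℤ) * d) = if (t:ℤ) ∣ d then (t:ℂ) else 0 := by
  have hrw : ∀ j : Fin t, gg t ((j:ℤ) * d) = gg t d ^ (j:ℕ) := by
    intro j; rw [gg_pow]
  simp_rw [hrw]
  rw [Fin.sum_univ_eq_sum_range (fun i => gg t d ^ i)]
  split_ifs with hd
  · simp [gg_dvd t ht d hd]
  · have hz := gg_ne_one t ht d hd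
    rw [geom_sum_eq hz]
    have hzt : gg t d ^ t = 1 := by
      rw [gg_pow]
      exact gg_dvd t ht _ ⟨d, by push_cast; ring⟩
    simp [hzt]

lemma kron (t : ℕ) (ht : 0 < t) (a b : Fin t) :
    ∑ j : Fin t, gg t ((j:ℤ) * ((a:ℤ) - (b:ℤ))) = if a = b then (t:ℂ) else 0 := by
  by_cases hab : a = b
  · have h0 : gg t 0 = 1 := by simp [gg]
    simp [hab, ortho t ht, h0]
  · rw [ortho t ht, if_neg, if_neg hab]
    intro hdvd
    have ha := a.isLt
    have hb := b.isLt
    have hd : (a:ℤ) - b = 0 := by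
      refine Int.eq_zero_of_dvd_of_natAbs_lt_natAbs hdvd ?_
      simp only [Int.natAbs_natCast]
      omega
    exact hab (Fin.ext (by omega))

theorem stmt_15 (t : ℕ) (ht : 2 ≤ t) (φ : Fin t → ℝ) (α : ℝ)
    (hα : α = (1 / 2 : ℝ) ^ ((1 : ℝ) / ((t : ℝ) - 1))) :
    ∃ B C : Fin t → ℂ,
      Real.sqrt (∑ j, ‖B j‖ ^ 2) ≤
          2 * Real.sqrt (∑ k, (φ k) ^ 2) ∧
      Real.sqrt (∑ j, ‖C j‖ ^ 2) ≤ 1 ∧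
      ∀ k : Fin t,
        (∑ j : Fin t,
            ((α : ℂ) * Complex.exp (2 * π * Complex.I * (j : ℕ) / t)) ^ (k : ℕ) *
              B j * C j).re = φ k := by
  have ht0 : 0 < t := by omega
  have htR : (0:ℝ) < t := Nat.cast_pos.mpr ht0
  have htC : (t:ℂ) ≠ 0 := Nat.cast_ne_zero.mpr ht0.ne'
  have ht2R : (2:ℝ) ≤ t := by exact_mod_cast ht
  have htm1 : (1:ℝ) ≤ (t:ℝ) - 1 := by linarith
  have hα0 : 0 < α := by rw [hα]; positivity
  have hα1 : α ≤ 1 := by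
    rw [hα]
    apply Real.rpow_le_one (by norm_num) (by norm_num)
    positivity
  have hαpow : α ^ (t-1) = 1/2 := by
    rw [hα, ← Real.rpow_natCast _ (t-1), ← Real.rpow_mul (by norm_num)]
    rw [show ((t-1:ℕ):ℝ) = (t:ℝ)-1 by push_cast [Nat.cast_sub (by omega : 1 ≤ t)]; ring]
    rw [show (1:ℝ)/((t:ℝ)-1) * ((t:ℝ)-1) = 1 by field_simp, Real.rpow_one]
  have hinv : ∀ m : Fin t, (α ^ (m:ℕ))⁻¹ ≤ 2 := by
    intro m
    have h1 : α ^ (t-1) ≤ α ^ (m:ℕ) := pow_le_pow_of_le_one hα0.le hα1 (by omega)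
    rw [hαpow] at h1
    calc (α ^ (m:ℕ))⁻¹ ≤ ((1:ℝ)/2)⁻¹ := by
          apply inv_anti₀ (by norm_num) h1
      _ = 2 := by norm_num
  set s := Real.sqrt t with hs
  have hs0 : 0 < s := Real.sqrt_pos.mpr htR
  have hs2 : s^2 = t := Real.sq_sqrt htR.le
  set c : Fin t → ℝ := fun m => φ m * (α ^ (m:ℕ))⁻¹ with hc
  set B : Fin t → ℂ := fun j => ((s⁻¹:ℝ):ℂ) * ∑ m : Fin t, (c m : ℂ) * gg t (-((j:ℤ) * (m:ℤ))) with hB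
  refine ⟨B, fun _ => ((s⁻¹:ℝ):ℂ), ?_, ?_, ?_⟩
  · -- B norm
    have hsum : ∑ j, ‖B j‖ ^ 2 = ∑ m, (c m)^2 := by
      have habs : ∀ j : Fin t, ‖B j‖ ^ 2 = (B j * (starRingEnd ℂ) (B j)).re := by
        intro j; rw [Complex.mul_conj]; simp [Complex.sq_norm]
      simp only [habs]
      rw [← Complex.re_sum]
      have hconj : ∀ j : Fin t, (starRingEnd ℂ) (B j)
          = ((s⁻¹:ℝ):ℂ) * ∑ m : Fin t, (c m : ℂ) * gg t ((j:ℤ)*(m:ℤ)) := by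
        intro j
        rw [hB]
        simp only [map_mul, map_sum, Complex.conj_ofReal, gg_conj, neg_neg]
      have hprod : ∀ j : Fin t, B j * (starRingEnd ℂ) (B j)
          = ∑ m : Fin t, ∑ n : Fin t,
              (((s⁻¹:ℝ):ℂ)^2 * (c m : ℂ) * (c n : ℂ)) * gg t ((j:ℤ)*((n:ℤ)-(m:ℤ))) := by
        intro j
        rw [hconj, hB, mul_mul_mul_comm, Finset.sum_mul_sum, Finset.mul_sum]
        apply Finset.sum_congr rfl; intro m _
        rw [Finset.mul_sum]
        apply Finset.sum_congr rfl; intro n _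
        rw [show ((j:ℤ)*((n:ℤ)-(m:ℤ))) = (-((j:ℤ)*(m:ℤ))) + (j:ℤ)*(n:ℤ) by ring, gg_add]
        ring
      simp only [hprod]
      rw [Finset.sum_comm]
      have hswap : ∀ m : Fin t,
          (∑ j : Fin t, ∑ n : Fin t,
            (((s⁻¹:ℝ):ℂ)^2 * (c m:ℂ)*(c n:ℂ)) * gg t ((j:ℤ)*((n:ℤ)-(m:ℤ))))
          = (((c m)^2 : ℝ) : ℂ) := by
        intro m
        rw [Finset.sum_comm]
        simp only [← Finset.mul_sum, kron t ht0, mul_ite, mul_zero]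
        rw [Finset.sum_ite_eq']
        simp only [Finset.mem_univ, if_true]
        have htsC : ((s:ℝ):ℂ)^2 = (t:ℂ) := by
          exact_mod_cast congrArg (fun x : ℝ => (x:ℂ)) hs2
        rw [← htsC]
        push_cast
        have hsC : ((s:ℝ):ℂ) ≠ 0 := by
          simp [Complex.ofReal_ne_zero]; exact hs0.ne'
        field_simp
      simp only [hswap]
      simp only [Complex.re_sum, ← Complex.ofReal_pow, Complex.ofReal_re]
    rw [hsum]
    have hle : ∑ m, (c m)^2 ≤ 4 * ∑ m, (φ m)^2 := by
      rw [Finset.mul_sum]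
      apply Finset.sum_le_sum
      intro m _
      have h2 := hinv m
      have h0 : (0:ℝ) ≤ (α ^ (m:ℕ))⁻¹ := by positivity
      have : ((α ^ (m:ℕ))⁻¹)^2 ≤ 4 := by nlinarith
      calc (c m)^2 = (φ m)^2 * ((α ^ (m:ℕ))⁻¹)^2 := by rw [hc]; ring
        _ ≤ (φ m)^2 * 4 := by nlinarith [sq_nonneg (φ m)]
        _ = 4 * (φ m)^2 := by ring
    calc Real.sqrt (∑ m, (c m)^2) ≤ Real.sqrt (4 * ∑ m, (φ m)^2) := Real.sqrt_le_sqrt hle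
      _ = 2 * Real.sqrt (∑ m, (φ m)^2) := by
          rw [Real.sqrt_mul (by norm_num), show (4:ℝ) = 2^2 by norm_num, Real.sqrt_sq (by norm_num)]
  · -- C norm
    have : ∑ _j : Fin t, ‖((s⁻¹:ℝ):ℂ)‖ ^ 2 = 1 := by
      rw [Finset.sum_const, Finset.card_univ, Fintype.card_fin]
      rw [Complex.norm_real, Real.norm_eq_abs, abs_of_pos (inv_pos.mpr hs0), nsmul_eq_mul, inv_pow, hs2]
      field_simp
    rw [this, Real.sqrt_one]
  · -- identity
    intro k
    have hgg : ∀ j : Fin t, Complex.exp (2*(π:ℂ)*Complex.I*((j:ℕ):ℂ)/t) = gg t (j:ℤ) := by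
      intro j; unfold gg; norm_num
    have hterm : ∀ j : Fin t, ((α:ℂ) * Complex.exp (2*(π:ℂ)*Complex.I*((j:ℕ):ℂ)/t))^(k:ℕ) * B j * ((s⁻¹:ℝ):ℂ)
        = ∑ m : Fin t, ((α:ℂ)^(k:ℕ) * ((s⁻¹:ℝ):ℂ)^2 * (c m : ℂ)) * gg t ((j:ℤ)*((k:ℤ)-(m:ℤ))) := by
      intro j
      rw [hgg, mul_pow, gg_pow, hB]
      simp only [Finset.mul_sum, Finset.sum_mul]
      apply Finset.sum_congr rfl
      intro m _
      rw [show ((j:ℤ)*((k:ℤ)-(m:ℤ))) = (k:ℤ)*(j:ℤ) + (-((j:ℤ)*(m:ℤ))) by ring, gg_add]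
      ring
    simp only [hterm]
    rw [Finset.sum_comm]
    simp only [← Finset.mul_sum]
    simp only [kron t ht0 k]
    simp only [mul_ite, mul_zero]
    rw [Finset.sum_ite_eq]
    simp only [Finset.mem_univ, if_true]
    have hαC : (α:ℂ) ≠ 0 := by
      simp [Complex.ofReal_ne_zero]; exact hα0.ne'
    have hsC : ((s:ℝ):ℂ) ≠ 0 := by
      simp [Complex.ofReal_ne_zero]; exact hs0.ne'
    have htsC : ((s:ℝ):ℂ)^2 = (t:ℂ) := by
      exact_mod_cast congrArg (fun x : ℝ => (x:ℂ)) hs2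
    have hck : c k = φ k * (α ^ (k:ℕ))⁻¹ := rfl
    have : (α:ℂ)^(k:ℕ) * ((s⁻¹:ℝ):ℂ)^2 * ((c k : ℝ):ℂ) * (t:ℂ) = ((φ k : ℝ) : ℂ) := by
      rw [hck, ← htsC]
      push_cast
      field_simp
    rw [this, Complex.ofReal_re]
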